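/- For the energy-conserving scheme with general potential V, defined by (y^{n+1} - y^n)/Δt = (T(p^{n+1}) - T(p^n))/(p^{n+1} - p^n) and (p^{n+1} - p^n)/Δt = -(V(y^{n+1}) - V(y^n))/(y^{n+1} - y^n) - γ(p^{n+1} + p^n)/2, with T(p) = p²/(2m), one has T(p^{n+1}) + V(y^{n+1}) = T(p^n) + V(y^n) - (γ/m)((p^{n+1}+p^n)/2)² Δt, provided y^{n+1} ≠ y^n and p^{n+1} ≠ p^n. -/

import Mathlib

theorem stmt8 (m γ Δt : ℝ) (hm : 0 < m) (hΔt : 0 < Δt)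
    (V : ℝ → ℝ) (T : ℝ → ℝ) (hT : ∀ p, T p = p ^ 2 / (2 * m))
    (y0 y1 p0 p1 : ℝ) (hy : y1 ≠ y0) (hp : p1 ≠ p0)
    (h1 : (y1 - y0) / Δt = (T p1 - T p0) / (p1 - p0))
    (h2 : (p1 - p0) / Δt = -(V y1 - V y0) / (y1 - y0) - γ * (p1 + p0) / 2) :
    T p1 + V y1 = T p0 + V y0 - (γ / m) * ((p1 + p0) / 2) ^ 2 * Δt := by
  have hy' : y1 - y0 ≠ 0 := sub_ne_zero.mpr hy
  have hp' : p1 - p0 ≠ 0 := sub_ne_zero.mpr hp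
  have hΔt' : Δt ≠ 0 := ne_of_gt hΔt
  have hm' : m ≠ 0 := ne_of_gt hm
  rw [hT, hT] at *
  field_simp at h1 h2 ⊢
  have e : (y1 - y0) * (2 * m) = (p1 + p0) * Δt := by
    apply mul_right_cancel₀ hp'
    linear_combination h1
  apply mul_right_cancel₀ hΔt'
  linear_combination (2*m) * h2 - (2*(p1-p0)+Δt*γ*(p1+p0)) * e
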